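/- Let Q be the bilinear form on ℤ² with matrix (−1, −1; 0, −1) (i.e., Q((a,b),(c,d)) = −ac − ad − bd). Let v ∈ ℤ² be primitive with Q(v,v) < −3, and let v₊, v₋ be the unique pair with v₋ × v = v × v₊ = v₋ × v₊ = 1 and |v₊|,|v₋| < |v|. Then Q(v₊, v₋) < 0. -/

import Mathlib

/-- Cross product on ℤ²: (a,b) × (c,d) = ad − bc. -/
def cross (v w : ℤ × ℤ) : ℤ := v.1 * w.2 - v.2 * w.1

/-- Euclidean norm of a vector in ℤ². -/
noncomputable def enormZ2 (v : ℤ × ℤ) : ℝ := Real.sqrt ((v.1 : ℝ) ^ 2 + (v.2 : ℝ) ^ 2)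

/-- A vector of ℤ² is primitive if its coordinates are coprime. -/
def IsPrimitive (v : ℤ × ℤ) : Prop := Int.gcd v.1 v.2 = 1

/-- The bilinear form with matrix `(−1, −1; 0, −1)`: `Q((a,b),(c,d)) = −ac − ad − bd`. -/
def QIminus (v w : ℤ × ℤ) : ℤ := -(v.1 * w.1) - v.1 * w.2 - v.2 * w.2

lemma key (c d e f : ℤ) (h3 : c*f - d*e = 1)
    (hq : 4 ≤ (c+e)^2+(c+e)*(d+f)+(d+f)^2)
    (hm : c^2+d^2 < (c+e)^2+(d+f)^2)
    (hp : e^2+f^2 < (c+e)^2+(d+f)^2) :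
    1 ≤ e*c+e*d+f*d := by
  have hNN : (c^2+d^2)*(e^2+f^2) = (c*e+d*f)^2+1 := by
    linear_combination (c*f-d*e+1)*h3
  have hT : 0 ≤ c*e+d*f := by
    by_contra hT
    push_neg at hT
    have hTle : c*e+d*f ≤ -1 := by linarith [Int.lt_iff_add_one_le.mp hT]
    have h1 : 1 - 2*(c*e+d*f) ≤ e^2+f^2 := by nlinarith [hm]
    have h2 : 1 - 2*(c*e+d*f) ≤ c^2+d^2 := by nlinarith [hp]
    nlinarith [hNN, h1, h2, hTle, mul_le_mul h2 h1 (by nlinarith) (by nlinarith)]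
  by_contra hcon
  push_neg at hcon
  have hS0 : e*c+e*d+f*d ≤ 0 := by linarith [Int.lt_iff_add_one_le.mp hcon]
  have hSm1 : -1 ≤ e*c+e*d+f*d := by
    by_contra h
    push_neg at h
    have hS2 : e*c+e*d+f*d ≤ -2 := by linarith [Int.lt_iff_add_one_le.mp h]
    have hed : e*d ≤ -2 - (c*e+d*f) := by linarith
    have h1 : (0:ℤ) ≤ -(e*d) - (c*e+d*f) - 2 := by linarith
    have h2 : (0:ℤ) ≤ -(e*d) + (c*e+d*f) + 2 := by linarith
    nlinarith [hNN, hT, mul_nonneg h1 h2, sq_nonneg (c*e), sq_nonneg (c*f), sq_nonneg (d*f)]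
  have hbig : 4*((c^2+c*d+d^2)*(e^2+e*f+f^2)) = (2*(e*c+e*d+f*d)+1)^2+3 := by
    linear_combination ((2*c*e+c*f+d*e+2*d*f)+(2*(e*c+e*d+f*d)+1) + 3*(c*f-d*e+1)) * h3
  have hqm0 : 0 ≤ c^2+c*d+d^2 := by nlinarith [sq_nonneg (2*c+d), sq_nonneg d]
  have hqp0 : 0 ≤ e^2+e*f+f^2 := by nlinarith [sq_nonneg (2*e+f), sq_nonneg f]
  have h01 : e*c+e*d+f*d = 0 ∨ e*c+e*d+f*d = -1 := by
    rcases eq_or_lt_of_le hS0 with h | h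
    · exact Or.inl h
    · exact Or.inr (le_antisymm (by linarith [Int.lt_iff_add_one_le.mp h]) hSm1)
  have hsq : (2*(e*c+e*d+f*d)+1)^2 = 1 := by
    rcases h01 with h | h <;> rw [h] <;> norm_num
  have hprod : (c^2+c*d+d^2)*(e^2+e*f+f^2) = 1 := by linarith
  rcases Int.mul_eq_one_iff_eq_one_or_neg_one.mp hprod with ⟨hq1, hq2⟩ | ⟨hq1, hq2⟩
  · have hqid : (c+e)^2+(c+e)*(d+f)+(d+f)^2
        = (c^2+c*d+d^2)+(e^2+e*f+f^2)+2*(e*c+e*d+f*d)+1 := by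
      linear_combination h3
    linarith
  · linarith

theorem Iminus_chi_neg (v vm vp : ℤ × ℤ) (hprim : IsPrimitive v)
    (hQ : QIminus v v < -3)
    (h1 : cross vm v = 1) (h2 : cross v vp = 1) (h3 : cross vm vp = 1)
    (h4 : enormZ2 vp < enormZ2 v) (h5 : enormZ2 vm < enormZ2 v) :
    QIminus vp vm < 0 := by
  obtain ⟨a, b⟩ := v
  obtain ⟨c, d⟩ := vm
  obtain ⟨e, f⟩ := vp
  simp only [cross, QIminus, enormZ2, IsPrimitive] at *
  have he : a = c + e := by linear_combination e*h1 + c*h2 - a*h3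
  have hf : b = d + f := by linear_combination f*h1 + d*h2 - b*h3
  have h4' : e^2+f^2 < a^2+b^2 := by
    have hr : ((e:ℝ)^2+(f:ℝ)^2) < (a:ℝ)^2+(b:ℝ)^2 := by
      by_contra hc
      push_neg at hc
      exact absurd (Real.sqrt_le_sqrt hc) (not_le.mpr h4)
    exact_mod_cast hr
  have h5' : c^2+d^2 < a^2+b^2 := by
    have hr : ((c:ℝ)^2+(d:ℝ)^2) < (a:ℝ)^2+(b:ℝ)^2 := by
      by_contra hc
      push_neg at hc
      exact absurd (Real.sqrt_le_sqrt hc) (not_le.mpr h5)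
    exact_mod_cast hr
  have hq4 : 4 ≤ a^2+a*b+b^2 := by nlinarith [Int.lt_iff_add_one_le.mp hQ]
  subst he hf
  have := key c d e f h3 (by linarith) (by linarith) (by linarith)
  linarith
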